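/- For n, n' ∈ ℕ₊ with n ≥ n', the histogram Σ_{i=0}^{n'} C(n', i) e_i is the maximum of the activation histograms of all ReLU layer functions from ℝ^n to ℝ^{n'}; concretely, every h ∈ RL(n, n') satisfies ℋ_{n'}(𝒮_h) ≼ Σ_{i=0}^{n'} C(n', i) e_i, and there exists h ∈ RL(n, n') with ℋ_{n'}(𝒮_h) = Σ_{i=0}^{n'} C(n', i) e_i. -/

import Mathlib

open Matrix

noncomputable def relu {n n' : ℕ} (W : Matrix (Fin n') (Fin n) ℝ) (b : Fin n' → ℝ)
    (x : Fin n → ℝ) : Fin n' → ℝ :=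
  fun i => max 0 (W i ⬝ᵥ x + b i)

noncomputable def sig {n n' : ℕ} (W : Matrix (Fin n') (Fin n) ℝ) (b : Fin n' → ℝ)
    (x : Fin n → ℝ) : Fin n' → Bool :=
  fun i => decide (0 < W i ⬝ᵥ x + b i)

/-- Forward pass through the first `l` layers: `fwd n W b l = h_l ∘ ⋯ ∘ h_1`. -/
noncomputable def fwd (n : ℕ → ℕ) (W : ∀ l : ℕ, Matrix (Fin (n (l + 1))) (Fin (n l)) ℝ)
    (b : ∀ l : ℕ, Fin (n (l + 1)) → ℝ) : (l : ℕ) → (Fin (n 0) → ℝ) → (Fin (n l) → ℝ)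
  | 0 => fun x => x
  | l + 1 => fun x => relu (W l) (b l) (fwd n W b l x)

/-- Multi signature of length `m`:
`msig n W b m x = (S_{h_1}(x), S_{h_2}(h_1(x)), …, S_{h_m}(h_{m-1}∘⋯∘h_1(x)))`. -/
noncomputable def msig (n : ℕ → ℕ) (W : ∀ l : ℕ, Matrix (Fin (n (l + 1))) (Fin (n l)) ℝ)
    (b : ∀ l : ℕ, Fin (n (l + 1)) → ℝ) (m : ℕ) (x : Fin (n 0) → ℝ) :
    ∀ l : Fin m, Fin (n (l.val + 1)) → Bool :=
  fun l => sig (W l.val) (b l.val) (fwd n W b l.val x)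

/-- Number of active units of a binary vector `s`, i.e. `|s|`. -/
def cnt {k : ℕ} (s : Fin k → Bool) : ℕ := (Finset.univ.filter fun j => s j = true).card

/-- `min(n_0, |s_1|, …, |s_i|)` for a length-`i` multi signature `s`. -/
def minAct (n : ℕ → ℕ) (i : ℕ) (s : ∀ l : Fin i, Fin (n (l.val + 1)) → Bool) : ℕ :=
  Finset.univ.fold min (n 0) (fun l : Fin i => cnt (s l))


/-- Tail sum `∑_{j ≥ J} v j` of a histogram. -/
noncomputable def tailSum (v : ℕ → ℕ) (J : ℕ) : ℕ :=
  ∑' j : ℕ, if J ≤ j then v j else 0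

/-- The partial order `≼` on histograms: `v ≼ w` iff all tail sums of `v` are dominated by
those of `w`. -/
def hle (v w : ℕ → ℕ) : Prop := ∀ J : ℕ, tailSum v J ≤ tailSum w J

/-- The histogram `e_i` with a single entry `1` at index `i`. -/
def histE (i : ℕ) : ℕ → ℕ := fun j => if j = i then 1 else 0

/-- The activation histogram `ℋ_{n'}(𝒮)`: entry `j` counts the signatures `s ∈ 𝒮` with
`|s| = j` active units. -/
noncomputable def actHist (n' : ℕ) (S : Set (Fin n' → Bool)) : ℕ → ℕ :=
  fun j => {s ∈ S | cnt s = j}.ncard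

/-- The clipping function `cl_k`: all mass at indices `≥ k` is moved to index `k`. -/
noncomputable def clip (k : ℕ) (v : ℕ → ℕ) : ℕ → ℕ :=
  fun i => if i < k then v i else if i = k then tailSum v k else 0

/-- The bound condition for a collection `γ` (accessed as `γ n' n` for `n ≤ n'`, `n' ≥ 1`):
every `γ n' n` is a histogram in `V` (finitely supported); for every ReLU layer function
`h ∈ RL(n, n')` with `0 ≤ n ≤ n'` the activation histogram of its attained signatures is
dominated by `γ n' n` (for `n = 0` the layer functions are the constants, with activation
histogram `e_0`); and `γ n' n ≼ γ n' m` whenever `n ≤ m ≤ n'`. -/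
def BoundCondition (γ : ℕ → ℕ → ℕ → ℕ) : Prop :=
  (∀ n' n : ℕ, 0 < n' → n ≤ n' → (Function.support (γ n' n)).Finite) ∧
  (∀ n' : ℕ, 0 < n' → hle (histE 0) (γ n' 0)) ∧
  (∀ n n' : ℕ, 0 < n → 0 < n' → n ≤ n' →
    ∀ (W : Matrix (Fin n') (Fin n) ℝ) (b : Fin n' → ℝ),
      hle (actHist n' (Set.range (sig W b))) (γ n' n)) ∧
  (∀ n' n m : ℕ, 0 < n' → n ≤ m → m ≤ n' → hle (γ n' n) (γ n' m))

/-- The transition function `φ^{(γ)}_{n'} : V → V`,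
`v ↦ ∑_{m} v_m · cl_{min(m,n')}(γ_{min(m,n'), n'})`. -/
noncomputable def phi (γ : ℕ → ℕ → ℕ → ℕ) (n' : ℕ) (v : ℕ → ℕ) : ℕ → ℕ :=
  fun i => ∑' m : ℕ, v m * clip (min m n') (γ n' (min m n')) i

/-- The dimension histogram `H̃^{(i)}(U)`: entry `j` counts the length-`i` multi signatures
`(s_1, …, s_i) ∈ U` with `min(n_0, |s_1|, …, |s_i|) = j`. -/
noncomputable def dimHist (n : ℕ → ℕ) (i : ℕ)
    (U : Set (∀ l : Fin i, Fin (n (l.val + 1)) → Bool)) : ℕ → ℕ :=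
  fun j => {u ∈ U | minAct n i u = j}.ncard

section Aux
variable {n' : ℕ}

lemma cnt_le' {k : ℕ} (s : Fin k → Bool) : cnt s ≤ k := by
  classical
  calc cnt s ≤ (Finset.univ : Finset (Fin k)).card := Finset.card_filter_le _ _
  _ = k := by simp

lemma card_cnt (n' j : ℕ) :
    (Finset.univ.filter fun s : Fin n' → Bool => cnt s = j).card = n'.choose j := by
  classical
  have h : ((Finset.univ : Finset (Fin n')).powersetCard j).card = n'.choose j := by
    simp [Finset.card_powersetCard]
  rw [← h]
  apply Finset.card_bij' (fun s _ => Finset.univ.filter fun i => s i = true)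
    (fun A _ => fun i => decide (i ∈ A))
  · intro s _
    funext i
    simp
  · intro A _
    ext i
    simp
  · intro s hs
    simp only [Finset.mem_filter, Finset.mem_univ, true_and] at hs
    rw [Finset.mem_powersetCard]
    exact ⟨Finset.subset_univ _, hs⟩
  · intro A hA
    rw [Finset.mem_powersetCard] at hA
    rw [Finset.mem_filter]
    refine ⟨Finset.mem_univ _, ?_⟩
    simp only [cnt]
    rw [← hA.2]
    congr 1
    ext i
    simp

lemma actHist_le (S : Set (Fin n' → Bool)) (j : ℕ) :
    actHist n' S j ≤ n'.choose j := by
  classical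
  rw [← card_cnt n' j, actHist]
  have hsub : {s ∈ S | cnt s = j} ⊆
      ↑(Finset.univ.filter fun s : Fin n' → Bool => cnt s = j) := by
    intro s hs
    simp only [Finset.coe_filter, Set.mem_setOf_eq, Finset.mem_univ, true_and]
    exact hs.2
  calc {s ∈ S | cnt s = j}.ncard
      ≤ (↑(Finset.univ.filter fun s : Fin n' → Bool => cnt s = j) : Set _).ncard :=
        Set.ncard_le_ncard hsub (Finset.finite_toSet _)
    _ = _ := Set.ncard_coe_finset _

lemma actHist_zero (S : Set (Fin n' → Bool)) (j : ℕ) (hj : n' < j) :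
    actHist n' S j = 0 := by
  have : {s ∈ S | cnt s = j} = ∅ := by
    ext s
    simp only [Set.mem_setOf_eq, Set.mem_empty_iff_false, iff_false, not_and]
    intro _ h
    exact absurd (h ▸ cnt_le' s) (by omega)
  simp [actHist, this]

lemma tailSum_eq (v : ℕ → ℕ) (N : ℕ) (hv : ∀ j, N ≤ j → v j = 0) (J : ℕ) :
    tailSum v J = ∑ j ∈ Finset.range N, if J ≤ j then v j else 0 := by
  apply tsum_eq_sum
  intro b hb
  rw [Finset.mem_range, not_lt] at hb
  rw [hv b hb]
  simp

lemma target_eq (n' j : ℕ) :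
    (∑ i ∈ Finset.range (n' + 1), if j = i then n'.choose i else 0) = n'.choose j := by
  rw [Finset.sum_ite_eq]
  by_cases h : j ∈ Finset.range (n' + 1)
  · simp [h]
  · rw [Finset.mem_range, not_lt] at h
    simp [Finset.mem_range, Nat.choose_eq_zero_of_lt (by omega : n' < j)]

end Aux

/-- For `n ≥ n' ≥ 1`, the histogram `∑_{i=0}^{n'} C(n', i) e_i` is the maximum of the
activation histograms over all ReLU layer functions in `RL(n, n')`: every
`h ∈ RL(n, n')` satisfies `ℋ_{n'}(𝒮_h) ≼ ∑_{i=0}^{n'} C(n', i) e_i`, and there is an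
`h ∈ RL(n, n')` attaining it with equality. -/
theorem stmt18 (n n' : ℕ) (hn' : 0 < n') (hnn : n' ≤ n) :
    (∀ (W : Matrix (Fin n') (Fin n) ℝ) (b : Fin n' → ℝ),
      hle (actHist n' (Set.range (sig W b)))
        (fun j => ∑ i ∈ Finset.range (n' + 1), if j = i then n'.choose i else 0)) ∧
    ∃ (W : Matrix (Fin n') (Fin n) ℝ) (b : Fin n' → ℝ),
      actHist n' (Set.range (sig W b)) =
        fun j => ∑ i ∈ Finset.range (n' + 1), if j = i then n'.choose i else 0 := by
  have htarget0 : ∀ j, n' + 1 ≤ j →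
      (∑ i ∈ Finset.range (n' + 1), if j = i then n'.choose i else 0) = 0 := by
    intro j hj
    rw [target_eq]
    exact Nat.choose_eq_zero_of_lt (by omega)
  constructor
  · intro W b J
    rw [tailSum_eq _ (n' + 1) (fun j hj => actHist_zero _ j (by omega)) J,
        tailSum_eq _ (n' + 1) htarget0 J]
    apply Finset.sum_le_sum
    intro j _
    split_ifs
    · rw [target_eq]
      exact actHist_le _ j
    · exact le_rfl
  · -- construction: W i j = if j = castLE i then 1 else 0, b = 0
    refine ⟨fun i j => if j = Fin.castLE hnn i then 1 else 0, fun _ => 0, ?_⟩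
    have hdot : ∀ (x : Fin n → ℝ) (i : Fin n'),
        (fun j => if j = Fin.castLE hnn i then (1:ℝ) else 0) ⬝ᵥ x = x (Fin.castLE hnn i) := by
      intro x i
      simp [dotProduct, ite_mul, Finset.sum_ite_eq']
    have hrange : Set.range (sig (fun i j => if j = Fin.castLE hnn i then (1:ℝ) else 0)
        (fun _ => (0:ℝ))) = Set.univ := by
      rw [Set.eq_univ_iff_forall]
      intro s
      refine ⟨fun j => if h : (j : ℕ) < n' then (if s ⟨j, h⟩ then 1 else -1) else -1, ?_⟩
      funext i
      simp only [sig, hdot, add_zero]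
      have hi : ((Fin.castLE hnn i : Fin n) : ℕ) < n' := by simp [i.isLt]
      simp only [hi, dif_pos]
      have : (⟨((Fin.castLE hnn i : Fin n) : ℕ), hi⟩ : Fin n') = i := by
        ext; simp
      rw [this]
      cases hs : s i <;> simp
    rw [hrange]
    funext j
    rw [target_eq]
    rw [← card_cnt n' j]
    rw [actHist]
    have : {s ∈ (Set.univ : Set (Fin n' → Bool)) | cnt s = j} =
        ↑(Finset.univ.filter fun s : Fin n' → Bool => cnt s = j) := by
      ext s; simp
    rw [this, Set.ncard_coe_finset]
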